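/- Two-variable Hadamard interpolation: let 0 < s₀ ≤ s₁, 0 < t₀ ≤ t₁ with log(t₁/t₀) = s₁ − s₀, and for 0 ≤ ρ ≤ 1 set s = (1−ρ)s₀ + ρs₁, t = t₀^{1−ρ} t₁^{ρ}. Then for every f continuous on 𝕋ⁿ_{s₁} × 𝔻ⁿ_{t₁} and holomorphic in the interior, |f|_{s,t} ≤ |f|_{s₀,t₀}^{1−ρ} · |f|_{s₁,t₁}^{ρ}. -/

import Mathlib

/-- The closed domain `𝕋ⁿ_s × 𝔻ⁿ_t` (strip of width `s` times polydisc of radius `t`),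
lifted to `ℂⁿ × ℂⁿ`. -/
def dom (n : ℕ) (s t : ℝ) : Set ((Fin n → ℂ) × (Fin n → ℂ)) :=
  {p | (∀ j, |(p.1 j).im| ≤ s) ∧ (∀ j, ‖p.2 j‖ ≤ t)}

/-- The open domain (interior of `dom n s t`). -/
def odom (n : ℕ) (s t : ℝ) : Set ((Fin n → ℂ) × (Fin n → ℂ)) :=
  {p | (∀ j, |(p.1 j).im| < s) ∧ (∀ j, ‖p.2 j‖ < t)}

/-- The sup norm `|f|_{s,t}` over `𝕋ⁿ_s × 𝔻ⁿ_t`. -/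
noncomputable def nrm (n : ℕ) (f : (Fin n → ℂ) × (Fin n → ℂ) → ℂ) (s t : ℝ) : ℝ :=
  sSup ((fun p => ‖f p‖) '' dom n s t)

open Complex Set Function

namespace Stmt12

variable {n : ℕ} {f : (Fin n → ℂ) × (Fin n → ℂ) → ℂ}

lemma nrm_nonneg (s t : ℝ) : 0 ≤ nrm n f s t :=
  Real.sSup_nonneg (by rintro x ⟨p, _, rfl⟩; exact norm_nonneg _)

lemma norm_le_nrm {s t B : ℝ} (hB : ∀ p ∈ dom n s t, ‖f p‖ ≤ B)
    {p : (Fin n → ℂ) × (Fin n → ℂ)} (hp : p ∈ dom n s t) : ‖f p‖ ≤ nrm n f s t :=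
  le_csSup ⟨B, by rintro x ⟨q, hq, rfl⟩; exact hB q hq⟩ (mem_image_of_mem _ hp)

lemma nrm_le {s t M : ℝ} (hM : 0 ≤ M) (h : ∀ p ∈ dom n s t, ‖f p‖ ≤ M) :
    nrm n f s t ≤ M :=
  Real.sSup_le (by rintro x ⟨p, hp, rfl⟩; exact h p hp) hM

lemma dom_mono {s t s' t' : ℝ} (hs : s ≤ s') (ht : t ≤ t') :
    dom n s t ⊆ dom n s' t' := by
  rintro p ⟨h1, h2⟩
  exact ⟨fun j => (h1 j).trans hs, fun j => (h2 j).trans ht⟩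

lemma shift_one
    (hper : ∀ (p : (Fin n → ℂ) × (Fin n → ℂ)) (j : Fin n),
      f (Function.update p.1 j (p.1 j + 2 * Real.pi), p.2) = f p)
    (j : Fin n) (k : ℤ) (θ r : Fin n → ℂ) :
    f (Function.update θ j (θ j + 2 * Real.pi * k), r) = f (θ, r) := by
  induction k using Int.induction_on with
  | zero => simp
  | succ k ih =>
      have h := hper (Function.update θ j (θ j + 2 * Real.pi * k), r) j
      simp only [Function.update_self, Function.update_idem] at h
      push_cast at h ih ⊢
      rw [show (θ j + 2 * (Real.pi:ℂ) * ((k:ℕ) + 1)) = θ j + 2 * Real.pi * (k:ℕ) + 2 * Real.pi by ring, h, ih]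
  | pred k ih =>
      have h := hper (Function.update θ j (θ j + 2 * Real.pi * (-(k : ℤ) - 1 : ℤ)), r) j
      simp only [Function.update_self, Function.update_idem] at h
      push_cast at h ih ⊢
      rw [show (θ j + 2 * (Real.pi:ℂ) * (-(k:ℕ) - 1) + 2 * Real.pi) = θ j + 2 * Real.pi * (-(k:ℕ)) by ring, ih] at h
      rw [h]

lemma shift_all
    (hper : ∀ (p : (Fin n → ℂ) × (Fin n → ℂ)) (j : Fin n),
      f (Function.update p.1 j (p.1 j + 2 * Real.pi), p.2) = f p)
    (c : Fin n → ℤ) (θ r : Fin n → ℂ) :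
    f (fun j => θ j + 2 * Real.pi * c j, r) = f (θ, r) := by
  have key : ∀ S : Finset (Fin n),
      f (fun j => if j ∈ S then θ j + 2 * Real.pi * c j else θ j, r) = f (θ, r) := by
    intro S
    induction S using Finset.induction_on with
    | empty => simp
    | @insert a S ha ih =>
        have e : (fun j => if j ∈ insert a S then θ j + 2 * Real.pi * c j else θ j)
            = Function.update (fun j => if j ∈ S then θ j + 2 * Real.pi * c j else θ j) a
              ((fun j => if j ∈ S then θ j + 2 * Real.pi * c j else θ j) a
                + 2 * Real.pi * c a) := by
          funext j
          rcases eq_or_ne j a with rfl | hj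
          · simp [Function.update_self, ha]
          · simp [Function.update_of_ne hj, Finset.mem_insert, hj]
        rw [e, shift_one hper a (c a), ih]
  have := key Finset.univ
  simpa using this

lemma exists_bound {s₁ t₁ : ℝ}
    (hf₁ : ContinuousOn f (dom n s₁ t₁))
    (hshift : ∀ (c : Fin n → ℤ) (θ r : Fin n → ℂ),
      f (fun j => θ j + 2 * Real.pi * c j, r) = f (θ, r)) :
    ∃ B : ℝ, 0 ≤ B ∧ ∀ p ∈ dom n s₁ t₁, ‖f p‖ ≤ B := by
  set C : Set ℂ := {z | z.re ∈ Icc 0 (2 * Real.pi) ∧ z.im ∈ Icc (-s₁) s₁} with hCdef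
  have hC : IsCompact C := by
    have : C = (fun p : ℝ × ℝ => (p.1 : ℂ) + p.2 * I) ''
        (Icc 0 (2 * Real.pi) ×ˢ Icc (-s₁) s₁) := by
      ext z
      constructor
      · rintro ⟨h1, h2⟩
        exact ⟨(z.re, z.im), ⟨h1, h2⟩, by simp [Complex.re_add_im]⟩
      · rintro ⟨⟨a, b⟩, ⟨h1, h2⟩, rfl⟩
        constructor <;> simp [h1, h2]
    rw [this]
    exact ((isCompact_Icc.prod isCompact_Icc)).image (by fun_prop)
  set K : Set ((Fin n → ℂ) × (Fin n → ℂ)) :=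
    (Set.univ.pi fun _ : Fin n => C) ×ˢ (Set.univ.pi fun _ : Fin n => Metric.closedBall (0:ℂ) t₁)
    with hKdef
  have hK : IsCompact K :=
    (isCompact_univ_pi fun _ => hC).prod (isCompact_univ_pi fun _ => isCompact_closedBall 0 t₁)
  have hKsub : K ⊆ dom n s₁ t₁ := by
    rintro ⟨θ, r⟩ ⟨h1, h2⟩
    refine ⟨fun j => ?_, fun j => ?_⟩
    · have := (h1 j (mem_univ j)).2
      rw [abs_le]; exact ⟨this.1, this.2⟩
    · have := h2 j (mem_univ j)
      rwa [Metric.mem_closedBall, dist_zero_right] at this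
  obtain ⟨B, hB⟩ := hK.exists_bound_of_continuousOn (hf₁.mono hKsub)
  refine ⟨max B 0, le_max_right _ _, ?_⟩
  rintro ⟨θ, r⟩ ⟨h1, h2⟩
  set c : Fin n → ℤ := fun j => -⌊(θ j).re / (2 * Real.pi)⌋ with hc
  have hfq : f (fun j => θ j + 2 * Real.pi * c j, r) = f (θ, r) := hshift c θ r
  have hq : (fun j => θ j + 2 * Real.pi * (c j : ℂ), r) ∈ K := by
    refine ⟨fun j _ => ?_, fun j _ => ?_⟩
    · have hre : (θ j + 2 * Real.pi * (c j : ℂ)).re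
          = (θ j).re - 2 * Real.pi * ⌊(θ j).re / (2 * Real.pi)⌋ := by
        simp [hc]
        ring
      have him : (θ j + 2 * Real.pi * (c j : ℂ)).im = (θ j).im := by simp
      have hpi : (0:ℝ) < 2 * Real.pi := by positivity
      have hfr1 : (0:ℝ) ≤ Int.fract ((θ j).re / (2 * Real.pi)) := Int.fract_nonneg _
      have hfr2 : Int.fract ((θ j).re / (2 * Real.pi)) < 1 := Int.fract_lt_one _
      have hid : (θ j).re - 2 * Real.pi * ⌊(θ j).re / (2 * Real.pi)⌋
          = 2 * Real.pi * Int.fract ((θ j).re / (2 * Real.pi)) := by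
        rw [Int.fract]; field_simp
      constructor
      · rw [Set.mem_Icc, hre, hid]
        constructor
        · positivity
        · nlinarith
      · rw [him, Set.mem_Icc, ← abs_le]; exact h1 j
    · rw [Metric.mem_closedBall, dist_zero_right]; exact h2 j
  calc ‖f (θ, r)‖ = ‖f (fun j => θ j + 2 * Real.pi * (c j : ℂ), r)‖ := by rw [hfq]
    _ ≤ B := hB _ hq
    _ ≤ max B 0 := le_max_left _ _

end Stmt12


open Stmt12 Complex.HadamardThreeLines in
/-- Two-variable Hadamard interpolation: with `log(t₁/t₀) = s₁ - s₀`,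
`s = (1-ρ)s₀ + ρs₁`, `t = t₀^{1-ρ} t₁^ρ`, one has
`|f|_{s,t} ≤ |f|_{s₀,t₀}^{1-ρ} |f|_{s₁,t₁}^ρ`. -/
theorem stmt_12 (n : ℕ) (s₀ s₁ t₀ t₁ ρ : ℝ)
    (hs₀ : 0 < s₀) (hss : s₀ ≤ s₁) (ht₀ : 0 < t₀) (htt : t₀ ≤ t₁)
    (hlog : Real.log (t₁ / t₀) = s₁ - s₀) (hρ0 : 0 ≤ ρ) (hρ1 : ρ ≤ 1)
    (f : (Fin n → ℂ) × (Fin n → ℂ) → ℂ)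
    (hf₁ : ContinuousOn f (dom n s₁ t₁))
    (hf₂ : DifferentiableOn ℂ f (odom n s₁ t₁))
    (hper : ∀ (p : (Fin n → ℂ) × (Fin n → ℂ)) (j : Fin n),
      f (Function.update p.1 j (p.1 j + 2 * Real.pi), p.2) = f p) :
    nrm n f ((1 - ρ) * s₀ + ρ * s₁) (t₀ ^ (1 - ρ) * t₁ ^ ρ)
      ≤ (nrm n f s₀ t₀) ^ (1 - ρ) * (nrm n f s₁ t₁) ^ ρ := by
  have ht₁ : 0 < t₁ := lt_of_lt_of_le ht₀ htt
  rcases eq_or_lt_of_le hss with heq | hlt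
  · -- degenerate case s₀ = s₁, hence t₀ = t₁
    subst heq
    have htt' : t₁ = t₀ := by
      have h0 : t₁ / t₀ = 1 := by
        have := Real.exp_log (div_pos ht₁ ht₀)
        rw [hlog] at this
        simpa using this.symm
      field_simp at h0
      linarith
    rw [htt']
    have e1 : (1 - ρ) * s₀ + ρ * s₀ = s₀ := by ring
    have e2 : t₀ ^ (1 - ρ) * t₀ ^ ρ = t₀ := by
      rw [← Real.rpow_add ht₀, sub_add_cancel, Real.rpow_one]
    rw [e1, e2]
    rcases eq_or_lt_of_le (nrm_nonneg (f := f) s₀ t₀) with hM | hM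
    · rw [← hM]
      positivity
    · rw [← Real.rpow_add hM, sub_add_cancel, Real.rpow_one]
  · -- main case s₀ < s₁
    have hΔ : 0 < s₁ - s₀ := by linarith
    set Δ := s₁ - s₀ with hΔdef
    have hlogt₁ : Real.log t₁ = Real.log t₀ + Δ := by
      rw [Real.log_div (ne_of_gt ht₁) (ne_of_gt ht₀)] at hlog
      linarith
    set s := (1 - ρ) * s₀ + ρ * s₁ with hsdef
    have hs : 0 < s := by nlinarith
    set t := t₀ ^ (1 - ρ) * t₁ ^ ρ with htdef
    have ht_eq : t = t₀ * Real.exp (ρ * Δ) := by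
      rw [htdef, Real.rpow_def_of_pos ht₀, Real.rpow_def_of_pos ht₁, ← Real.exp_add, hlogt₁]
      nth_rewrite 3 [show t₀ = Real.exp (Real.log t₀) from (Real.exp_log ht₀).symm]
      rw [← Real.exp_add]
      congr 1
      ring
    have ht : 0 < t := by rw [ht_eq]; positivity
    -- global bound on dom n s₁ t₁
    have hshift : ∀ (c : Fin n → ℤ) (θ r : Fin n → ℂ),
        f (fun j => θ j + 2 * Real.pi * c j, r) = f (θ, r) := shift_all hper
    obtain ⟨B, hB0, hB⟩ := exists_bound hf₁ hshift
    apply nrm_le (mul_nonneg (Real.rpow_nonneg (nrm_nonneg _ _) _) (Real.rpow_nonneg (nrm_nonneg _ _) _))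
    rintro ⟨θ, r⟩ ⟨hp1, hp2⟩
    -- the auxiliary one-variable function
    set H : ℂ → (Fin n → ℂ) × (Fin n → ℂ) := fun z =>
      (fun j => ((θ j).re : ℂ) + I * (((θ j).im / s : ℝ) : ℂ) * ((s₀ : ℂ) + z * (Δ : ℂ)),
       fun j => r j * Complex.exp ((z - (ρ : ℂ)) * (Δ : ℂ))) with hHdef
    have him : ∀ (z : ℂ) (j : Fin n),
        ((H z).1 j).im = ((θ j).im / s) * (s₀ + z.re * Δ) := by
      intro z j
      simp only [hHdef, Complex.add_im, Complex.mul_im, Complex.mul_re,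
        Complex.ofReal_re, Complex.ofReal_im, Complex.I_re, Complex.I_im,
        Complex.add_re, Complex.mul_re]
      ring
    have hnormr : ∀ (z : ℂ) (j : Fin n),
        ‖(H z).2 j‖ = ‖r j‖ * Real.exp ((z.re - ρ) * Δ) := by
      intro z j
      simp [hHdef, Complex.norm_exp, Complex.mul_re]
    have hc1 : ∀ j : Fin n, |(θ j).im / s| ≤ 1 := by
      intro j
      rw [abs_div, abs_of_pos hs, div_le_one hs]
      exact hp1 j
    -- membership of H z in the various domains
    have hmem : ∀ z : ℂ, z.re ∈ Icc (0:ℝ) 1 →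
        H z ∈ dom n (s₀ + z.re * Δ) (t₀ * Real.exp (z.re * Δ)) := by
      intro z hz
      constructor
      · intro j
        rw [him z j, abs_mul]
        have h1 : (0:ℝ) ≤ s₀ + z.re * Δ := by nlinarith [hz.1]
        rw [_root_.abs_of_nonneg h1]
        simpa using mul_le_mul_of_nonneg_right (hc1 j) h1
      · intro j
        rw [hnormr z j]
        have h2 : ‖r j‖ ≤ t := hp2 j
        calc ‖r j‖ * Real.exp ((z.re - ρ) * Δ)
            ≤ t * Real.exp ((z.re - ρ) * Δ) := by
              apply mul_le_mul_of_nonneg_right h2 (Real.exp_nonneg _)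
          _ = t₀ * Real.exp (z.re * Δ) := by
              rw [ht_eq, mul_assoc, ← Real.exp_add]
              congr 2
              ring
    have hsub1 : ∀ z : ℂ, z.re ∈ Icc (0:ℝ) 1 → H z ∈ dom n s₁ t₁ := by
      intro z hz
      apply dom_mono (s := s₀ + z.re * Δ) (t := t₀ * Real.exp (z.re * Δ)) ?_ ?_ (hmem z hz)
      · nlinarith [hz.2]
      · calc t₀ * Real.exp (z.re * Δ) ≤ t₀ * Real.exp Δ := by
              apply mul_le_mul_of_nonneg_left _ (le_of_lt ht₀)
              apply Real.exp_le_exp.mpr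
              nlinarith [hz.2]
          _ = t₁ := by
              rw [show Δ = Real.log t₁ - Real.log t₀ by rw [hlogt₁]; ring,
                Real.exp_sub, Real.exp_log ht₁, Real.exp_log ht₀]
              field_simp
    have hsub2 : ∀ z : ℂ, z.re ∈ Ioo (0:ℝ) 1 → H z ∈ odom n s₁ t₁ := by
      intro z hz
      obtain ⟨h1, h2⟩ := hmem z ⟨le_of_lt hz.1, le_of_lt hz.2⟩
      constructor
      · intro j
        apply lt_of_le_of_lt (h1 j)
        nlinarith [hz.2]
      · intro j
        apply lt_of_le_of_lt (h2 j)
        calc t₀ * Real.exp (z.re * Δ) < t₀ * Real.exp Δ := by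
              apply mul_lt_mul_of_pos_left _ ht₀
              apply Real.exp_lt_exp.mpr
              nlinarith [hz.2]
          _ = t₁ := by
              rw [show Δ = Real.log t₁ - Real.log t₀ by rw [hlogt₁]; ring,
                Real.exp_sub, Real.exp_log ht₁, Real.exp_log ht₀]
              field_simp
    -- H is entire
    have hH : Differentiable ℂ H := by
      rw [hHdef]
      apply Differentiable.prodMk
      · apply differentiable_pi.mpr
        intro j
        fun_prop
      · apply differentiable_pi.mpr
        intro j
        fun_prop
    set G : ℂ → ℂ := fun z => f (H z) with hGdef
    -- odom is open
    have hodom_open : IsOpen (odom n s₁ t₁) := by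
      have : odom n s₁ t₁ =
          (⋂ j : Fin n, {p : (Fin n → ℂ) × (Fin n → ℂ) | |(p.1 j).im| < s₁}) ∩
          (⋂ j : Fin n, {p : (Fin n → ℂ) × (Fin n → ℂ) | ‖p.2 j‖ < t₁}) := by
        ext p
        simp only [odom, Set.mem_inter_iff, Set.mem_iInter, Set.mem_setOf_eq]
      rw [this]
      apply IsOpen.inter
      · apply isOpen_iInter_of_finite
        intro j
        have : Continuous fun p : (Fin n → ℂ) × (Fin n → ℂ) => |(p.1 j).im| := by fun_prop
        exact isOpen_lt this continuous_const
      · apply isOpen_iInter_of_finite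
        intro j
        have : Continuous fun p : (Fin n → ℂ) × (Fin n → ℂ) => ‖p.2 j‖ := by fun_prop
        exact isOpen_lt this continuous_const
    have hGd : DiffContOnCl ℂ G (verticalStrip 0 1) := by
      constructor
      · apply DifferentiableOn.comp (t := odom n s₁ t₁) hf₂ hH.differentiableOn
        intro z hz
        exact hsub2 z hz
      · have hcl : closure (verticalStrip 0 1) = verticalClosedStrip 0 1 := by
          rw [verticalStrip, verticalClosedStrip, ← closure_Ioo (zero_ne_one),
            ← closure_preimage_re]
        rw [hcl]
        apply ContinuousOn.comp (t := dom n s₁ t₁) hf₁ hH.continuous.continuousOn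
        intro z hz
        exact hsub1 z hz
    have hGB : BddAbove ((norm ∘ G) '' verticalClosedStrip 0 1) := by
      refine ⟨B, ?_⟩
      rintro x ⟨z, hz, rfl⟩
      exact hB _ (hsub1 z hz)
    have ha : ∀ z ∈ re ⁻¹' {(0:ℝ)}, ‖G z‖ ≤ nrm n f s₀ t₀ := by
      intro z hz
      have hz0 : z.re = 0 := hz
      have : H z ∈ dom n s₀ t₀ := by
        have := hmem z (by rw [hz0]; exact ⟨le_refl 0, zero_le_one⟩)
        rw [hz0] at this
        simpa using this
      exact norm_le_nrm (fun p hp => hB p (dom_mono hss htt hp)) this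
    have hb : ∀ z ∈ re ⁻¹' {(1:ℝ)}, ‖G z‖ ≤ nrm n f s₁ t₁ := by
      intro z hz
      have hz1 : z.re = 1 := hz
      exact norm_le_nrm hB (hsub1 z (by rw [hz1]; exact ⟨zero_le_one, le_refl 1⟩))
    have hρmem : (ρ : ℂ) ∈ verticalClosedStrip 0 1 := by
      simp [verticalClosedStrip, Set.mem_Icc, hρ0, hρ1]
    have key := norm_le_interp_of_mem_verticalClosedStrip₀₁' G hρmem hGd hGB ha hb
    rw [Complex.ofReal_re] at key
    -- identify G ρ with f (θ, r)
    have hHρ : H (ρ : ℂ) = (θ, r) := by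
      rw [hHdef]
      refine Prod.ext ?_ ?_
      · funext j
        simp only
        have e1 : ((s₀ : ℂ) + (ρ : ℂ) * (Δ : ℂ)) = (s : ℂ) := by
          rw [hsdef, hΔdef]
          push_cast
          ring
        rw [e1]
        have hs' : (s : ℂ) ≠ 0 := by
          simpa using ne_of_gt hs
        rw [show (I * ((((θ j).im / s : ℝ)) : ℂ) * (s : ℂ)) = (((θ j).im : ℝ) : ℂ) * I by
          push_cast; field_simp]
        exact Complex.re_add_im (θ j)
      · funext j
        simp
    have hGρ : G (ρ : ℂ) = f (θ, r) := by rw [hGdef]; simp only [hHρ]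
    rw [hGρ] at key
    exact key
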